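/- arXiv:1705.04573 — 4 statements merged into one kernel-verified Lean document; each statement's English description precedes it below -/
import Mathlib

section
/- Let A be a set with two associative binary operations · and ⋆ satisfying the interchange law (a·b)⋆(c·d) = (a⋆c)·(b⋆d). Then for all a1,...,a9 ∈ A: (a1⋆a2)·(a3⋆a4⋆a5⋆a6)·(a7⋆a8⋆a9) = (a1⋆a2)·(a3⋆a5⋆a4⋆a6)·(a7⋆a8⋆a9). -/
/-- Bremner–Madariaga arity-9 hidden commutativity in `Ass ⊗ Ass`. -/
theorem stmt6 {A : Type*} (m s : A → A → A)
    (hm : ∀ a b c, m (m a b) c = m a (m b c))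
    (hs : ∀ a b c, s (s a b) c = s a (s b c))
    (hint : ∀ a b c d, s (m a b) (m c d) = m (s a c) (s b d)) :
    ∀ a1 a2 a3 a4 a5 a6 a7 a8 a9 : A,
      m (m (s a1 a2) (s (s (s a3 a4) a5) a6)) (s (s a7 a8) a9) =
      m (m (s a1 a2) (s (s (s a3 a5) a4) a6)) (s (s a7 a8) a9) := by
  intro a1 a2 a3 a4 a5 a6 a7 a8 a9
  calc (m (m (s a1 a2) (s (s (s a3 a4) a5) a6)) (s (s a7 a8) a9))
      _ = (m (m (s a1 a2) (s (s a3 a4) (s a5 a6))) (s (s a7 a8) a9)) := by rw [hs (s a3 a4) a5 a6]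
      _ = (m (s (m a1 (s a3 a4)) (m a2 (s a5 a6))) (s (s a7 a8) a9)) := by rw [← hint a1 (s a3 a4) a2 (s a5 a6)]
      _ = (s (m (m a1 (s a3 a4)) (s a7 a8)) (m (m a2 (s a5 a6)) a9)) := by rw [← hint (m a1 (s a3 a4)) (s a7 a8) (m a2 (s a5 a6)) a9]
      _ = (s (m a1 (m (s a3 a4) (s a7 a8))) (m (m a2 (s a5 a6)) a9)) := by rw [hm a1 (s a3 a4) (s a7 a8)]
      _ = (m (s a1 (m a2 (s a5 a6))) (s (m (s a3 a4) (s a7 a8)) a9)) := by rw [hint a1 (m (s a3 a4) (s a7 a8)) (m a2 (s a5 a6)) a9]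
      _ = (m (s a1 (m a2 (s a5 a6))) (s (s (m a3 a7) (m a4 a8)) a9)) := by rw [← hint a3 a7 a4 a8]
      _ = (m (s a1 (m a2 (s a5 a6))) (s (m a3 a7) (s (m a4 a8) a9))) := by rw [hs (m a3 a7) (m a4 a8) a9]
      _ = (s (m a1 (m a3 a7)) (m (m a2 (s a5 a6)) (s (m a4 a8) a9))) := by rw [← hint a1 (m a3 a7) (m a2 (s a5 a6)) (s (m a4 a8) a9)]
      _ = (s (m (m a1 a3) a7) (m (m a2 (s a5 a6)) (s (m a4 a8) a9))) := by rw [← hm a1 a3 a7]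
      _ = (m (s (m a1 a3) (m a2 (s a5 a6))) (s a7 (s (m a4 a8) a9))) := by rw [hint (m a1 a3) a7 (m a2 (s a5 a6)) (s (m a4 a8) a9)]
      _ = (m (m (s a1 a2) (s a3 (s a5 a6))) (s a7 (s (m a4 a8) a9))) := by rw [hint a1 a3 a2 (s a5 a6)]
      _ = (m (m (s a1 a2) (s (s a3 a5) a6)) (s a7 (s (m a4 a8) a9))) := by rw [← hs a3 a5 a6]
      _ = (m (s (m a1 (s a3 a5)) (m a2 a6)) (s a7 (s (m a4 a8) a9))) := by rw [← hint a1 (s a3 a5) a2 a6]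
      _ = (s (m (m a1 (s a3 a5)) a7) (m (m a2 a6) (s (m a4 a8) a9))) := by rw [← hint (m a1 (s a3 a5)) a7 (m a2 a6) (s (m a4 a8) a9)]
      _ = (s (m a1 (m (s a3 a5) a7)) (m (m a2 a6) (s (m a4 a8) a9))) := by rw [hm a1 (s a3 a5) a7]
      _ = (m (s a1 (m a2 a6)) (s (m (s a3 a5) a7) (s (m a4 a8) a9))) := by rw [hint a1 (m (s a3 a5) a7) (m a2 a6) (s (m a4 a8) a9)]
      _ = (m (s a1 (m a2 a6)) (s (s (m (s a3 a5) a7) (m a4 a8)) a9)) := by rw [← hs (m (s a3 a5) a7) (m a4 a8) a9]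
      _ = (m (s a1 (m a2 a6)) (s (m (s (s a3 a5) a4) (s a7 a8)) a9)) := by rw [hint (s a3 a5) a7 a4 a8]
      _ = (s (m a1 (m (s (s a3 a5) a4) (s a7 a8))) (m (m a2 a6) a9)) := by rw [← hint a1 (m (s (s a3 a5) a4) (s a7 a8)) (m a2 a6) a9]
      _ = (s (m (m a1 (s (s a3 a5) a4)) (s a7 a8)) (m (m a2 a6) a9)) := by rw [← hm a1 (s (s a3 a5) a4) (s a7 a8)]
      _ = (m (s (m a1 (s (s a3 a5) a4)) (m a2 a6)) (s (s a7 a8) a9)) := by rw [hint (m a1 (s (s a3 a5) a4)) (s a7 a8) (m a2 a6) a9]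
      _ = (m (m (s a1 a2) (s (s (s a3 a5) a4) a6)) (s (s a7 a8) a9)) := by rw [hint a1 (s (s a3 a5) a4) a2 a6]
end

section
/- Let A be a set with two associative binary operations · and ⋆ satisfying the interchange law (a·b)⋆(c·d) = (a⋆c)·(b⋆d). Then for all a1,...,a16 ∈ A: (a1⋆a2⋆a3⋆a4)·(a5⋆a6⋆a7⋆a8)·(a9⋆a10⋆a11⋆a12)·(a13⋆a14⋆a15⋆a16) = (a1⋆a2⋆a3⋆a4)·(a5⋆a7⋆a6⋆a8)·(a9⋆a10⋆a11⋆a12)·(a13⋆a14⋆a15⋆a16). -/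
/-- Kock's arity-16 hidden commutativity in `Ass ⊗ Ass`. -/
theorem stmt7 {A : Type*} (m s : A → A → A)
    (hm : ∀ a b c, m (m a b) c = m a (m b c))
    (hs : ∀ a b c, s (s a b) c = s a (s b c))
    (hint : ∀ a b c d, s (m a b) (m c d) = m (s a c) (s b d)) :
    ∀ a1 a2 a3 a4 a5 a6 a7 a8 a9 a10 a11 a12 a13 a14 a15 a16 : A,
      m (m (m (s (s (s a1 a2) a3) a4) (s (s (s a5 a6) a7) a8))
          (s (s (s a9 a10) a11) a12)) (s (s (s a13 a14) a15) a16) =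
      m (m (m (s (s (s a1 a2) a3) a4) (s (s (s a5 a7) a6) a8))
          (s (s (s a9 a10) a11) a12)) (s (s (s a13 a14) a15) a16) := by
  intro a1 a2 a3 a4 a5 a6 a7 a8 a9 a10 a11 a12 a13 a14 a15 a16
  exact ((congrArg (fun x => m x (s (s (s a13 a14) a15) a16)) (congrArg (fun x => m x (s (s (s a9 a10) a11) a12)) (congrArg (m (s (s (s a1 a2) a3) a4)) (hs (s a5 a6) a7 a8)))).trans ((congrArg (fun x => m x (s (s (s a13 a14) a15) a16)) (congrArg (fun x => m x (s (s (s a9 a10) a11) a12)) (hint (s (s a1 a2) a3) (s a5 a6) a4 (s a7 a8)).symm)).trans ((congrArg (fun x => m x (s (s (s a13 a14) a15) a16)) (hint (m (s (s a1 a2) a3) (s a5 a6)) (s (s a9 a10) a11) (m a4 (s a7 a8)) a12).symm).trans ((congrArg (fun x => m x (s (s (s a13 a14) a15) a16)) (congrArg (fun x => s x (m (m a4 (s a7 a8)) a12)) (hm (s (s a1 a2) a3) (s a5 a6) (s (s a9 a10) a11)))).trans ((congrArg (fun x => m x (s (s (s a13 a14) a15) a16)) (hint (s (s a1 a2) a3)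 (m (s a5 a6) (s (s a9 a10) a11)) (m a4 (s a7 a8)) a12)).trans ((congrArg (fun x => m x (s (s (s a13 a14) a15) a16)) (congrArg (m (s (s (s a1 a2) a3) (m a4 (s a7 a8)))) (congrArg (fun x => s x a12) (hint a5 (s a9 a10) a6 a11).symm))).trans ((congrArg (fun x => m x (s (s (s a13 a14) a15) a16)) (congrArg (m (s (s (s a1 a2) a3) (m a4 (s a7 a8)))) (hs (m a5 (s a9 a10)) (m a6 a11) a12))).trans ((congrArg (fun x => m x (s (s (s a13 a14) a15) a16)) (hint (s (s a1 a2) a3) (m a5 (s a9 a10)) (m a4 (s a7 a8)) (s (m a6 a11) a12)).symm).trans ((congrArg (fun x => m x (s (s (s a13 a14) a15) a16)) (congrArg (fun x => s x (m (m a4 (s a7 a8)) (s (m a6 a11) a12))) (hm (s (s a1 a2) a3) a5 (s a9 a10)).symm)).trans ((congrArg (fun x => m x (s (s (s a13 a14) a15) a16)) (hint (m (s (s a1 a2) a3) a5) (s a9 a10) (m a4 (s a7 a8)) (s (m a6 a11) a12))).trans ((congrArg (fun x => m x (s (s (s a13 a14) a15) a16)) (congrArg (fun x => m x (s (s a9 a10)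 (s (m a6 a11) a12))) (hint (s (s a1 a2) a3) a5 a4 (s a7 a8)))).trans ((congrArg (fun x => m x (s (s (s a13 a14) a15) a16)) (congrArg (fun x => m x (s (s a9 a10) (s (m a6 a11) a12))) (congrArg (m (s (s (s a1 a2) a3) a4)) (hs a5 a7 a8).symm))).trans ((congrArg (fun x => m x (s (s (s a13 a14) a15) a16)) (congrArg (fun x => m x (s (s a9 a10) (s (m a6 a11) a12))) (hint (s (s a1 a2) a3) (s a5 a7) a4 a8).symm)).trans ((congrArg (fun x => m x (s (s (s a13 a14) a15) a16)) (hint (m (s (s a1 a2) a3) (s a5 a7)) (s a9 a10) (m a4 a8) (s (m a6 a11) a12)).symm).trans ((congrArg (fun x => m x (s (s (s a13 a14) a15) a16)) (congrArg (fun x => s x (m (m a4 a8) (s (m a6 a11) a12))) (hm (s (s a1 a2) a3) (s a5 a7) (s a9 a10)))).trans ((congrArg (fun x => m x (s (s (s a13 a14) a15) a16)) (hint (s (s a1 a2) a3) (m (s a5 a7) (s a9 a10)) (m a4 a8) (s (m a6 a11) a12))).trans ((congrArg (fun x => m x (s (s (s a13 a14) a15) a16)) (congrArg (m (s (s (s a1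 a2) a3) (m a4 a8))) (hs (m (s a5 a7) (s a9 a10)) (m a6 a11) a12).symm)).trans ((congrArg (fun x => m x (s (s (s a13 a14) a15) a16)) (congrArg (m (s (s (s a1 a2) a3) (m a4 a8))) (congrArg (fun x => s x a12) (hint (s a5 a7) (s a9 a10) a6 a11)))).trans ((congrArg (fun x => m x (s (s (s a13 a14) a15) a16)) (hint (s (s a1 a2) a3) (m (s (s a5 a7) a6) (s (s a9 a10) a11)) (m a4 a8) a12).symm).trans ((congrArg (fun x => m x (s (s (s a13 a14) a15) a16)) (congrArg (fun x => s x (m (m a4 a8) a12)) (hm (s (s a1 a2) a3) (s (s a5 a7) a6) (s (s a9 a10) a11)).symm)).trans ((congrArg (fun x => m x (s (s (s a13 a14) a15) a16)) (hint (m (s (s a1 a2) a3) (s (s a5 a7) a6)) (s (s a9 a10) a11) (m a4 a8) a12)).trans (congrArg (fun x => m x (s (s (s a13 a14) a15) a16)) (congrArg (fun x => m x (s (s (s a9 a10) a11) a12)) (hint (s (s a1 a2) a3) (s (s a5 a7) a6) a4 a8))))))))))))))))))))))))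
end

section
/- Define the set S_n of '2-dimensional association types' of arity n inductively: the trivial type has arity 1; given k ≥ 2 types of arities n_1,...,n_k with n = n_1+...+n_k, a horizontal composite and a vertical composite each give a type of arity n, subject to the identification that a horizontal composite of two vertical composites of pairs equals the corresponding vertical composite of two horizontal composites (interchange). Then |S_1| = 1, |S_2| = 2, |S_3| = 8 and |S_4| = 39 when composites are restricted to be binary. -/
/-- Binary 2-dimensional association types: the trivial type, horizontal
composites and vertical composites. -/
inductive AssocType2 : Type
  | leaf : AssocType2
  | h : AssocType2 → AssocType2 → AssocType2
  | v : AssocType2 → AssocType2 → AssocType2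

/-- The arity (number of leaves) of a 2-dimensional association type. -/
def AssocType2.arity : AssocType2 → ℕ
  | .leaf => 1
  | .h a b => a.arity + b.arity
  | .v a b => a.arity + b.arity

/-- The interchange identification, closed under congruence: a horizontal
composite of two vertical composites equals the corresponding vertical composite
of two horizontal composites. -/
inductive AssocType2.Rel : AssocType2 → AssocType2 → Prop
  | interchange (a b c d : AssocType2) :
      AssocType2.Rel (.h (.v a b) (.v c d)) (.v (.h a c) (.h b d))
  | congr_h_left {a a' : AssocType2} (b : AssocType2) :
      AssocType2.Rel a a' → AssocType2.Rel (.h a b) (.h a' b)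
  | congr_h_right (a : AssocType2) {b b' : AssocType2} :
      AssocType2.Rel b b' → AssocType2.Rel (.h a b) (.h a b')
  | congr_v_left {a a' : AssocType2} (b : AssocType2) :
      AssocType2.Rel a a' → AssocType2.Rel (.v a b) (.v a' b)
  | congr_v_right (a : AssocType2) {b b' : AssocType2} :
      AssocType2.Rel b b' → AssocType2.Rel (.v a b) (.v a b')

/-- `S n`: 2-dimensional association types of arity `n`, modulo interchange. -/
def S (n : ℕ) : Type :=
  {q : Quot AssocType2.Rel // ∃ t : AssocType2, t.arity = n ∧ Quot.mk _ t = q}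

deriving instance DecidableEq for AssocType2

namespace AssocType2

/-- smart `h` constructor pushing `v` to the top -/
def hh : AssocType2 → AssocType2 → AssocType2
  | .v a1 a2, .v b1 b2 => .v (hh a1 b1) (hh a2 b2)
  | a, b => .h a b

def nf : AssocType2 → AssocType2
  | .leaf => .leaf
  | .h a b => hh (nf a) (nf b)
  | .v a b => .v (nf a) (nf b)

lemma mk_congr_h (y : AssocType2) {a a' : AssocType2}
    (h : Quot.mk Rel a = Quot.mk Rel a') :
    Quot.mk Rel (.h a y) = Quot.mk Rel (.h a' y) :=
  congrArg (Quot.lift (fun x => Quot.mk Rel (.h x y))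
    (fun _ _ r => Quot.sound (.congr_h_left y r))) h

lemma mk_congr_h' (y : AssocType2) {a a' : AssocType2}
    (h : Quot.mk Rel a = Quot.mk Rel a') :
    Quot.mk Rel (.h y a) = Quot.mk Rel (.h y a') :=
  congrArg (Quot.lift (fun x => Quot.mk Rel (.h y x))
    (fun _ _ r => Quot.sound (.congr_h_right y r))) h

lemma mk_congr_v (y : AssocType2) {a a' : AssocType2}
    (h : Quot.mk Rel a = Quot.mk Rel a') :
    Quot.mk Rel (.v a y) = Quot.mk Rel (.v a' y) :=
  congrArg (Quot.lift (fun x => Quot.mk Rel (.v x y))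
    (fun _ _ r => Quot.sound (.congr_v_left y r))) h

lemma mk_congr_v' (y : AssocType2) {a a' : AssocType2}
    (h : Quot.mk Rel a = Quot.mk Rel a') :
    Quot.mk Rel (.v y a) = Quot.mk Rel (.v y a') :=
  congrArg (Quot.lift (fun x => Quot.mk Rel (.v y x))
    (fun _ _ r => Quot.sound (.congr_v_right y r))) h

lemma mk_hh : ∀ a b : AssocType2, Quot.mk Rel (hh a b) = Quot.mk Rel (.h a b)
  | .leaf, b => by cases b <;> rfl
  | .h a1 a2, b => by cases b <;> rfl
  | .v a1 a2, .leaf => rfl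
  | .v a1 a2, .h b1 b2 => rfl
  | .v a1 a2, .v b1 b2 => by
      show Quot.mk Rel (.v (hh a1 b1) (hh a2 b2)) = _
      rw [mk_congr_v _ (mk_hh a1 b1), mk_congr_v' _ (mk_hh a2 b2)]
      exact (Quot.sound (.interchange a1 a2 b1 b2)).symm

lemma mk_nf : ∀ t : AssocType2, Quot.mk Rel (nf t) = Quot.mk Rel t
  | .leaf => rfl
  | .h a b => by
      show Quot.mk Rel (hh (nf a) (nf b)) = _
      rw [mk_hh, mk_congr_h _ (mk_nf a), mk_congr_h' _ (mk_nf b)]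
  | .v a b => by
      show Quot.mk Rel (.v (nf a) (nf b)) = _
      rw [mk_congr_v _ (mk_nf a), mk_congr_v' _ (mk_nf b)]

lemma nf_respects : ∀ {a b : AssocType2}, Rel a b → nf a = nf b := by
  intro a b r
  induction r with
  | interchange a b c d => simp [nf, hh]
  | congr_h_left b _ ih => simp [nf, ih]
  | congr_h_right a _ ih => simp [nf, ih]
  | congr_v_left b _ ih => simp [nf, ih]
  | congr_v_right a _ ih => simp [nf, ih]

def nfQ : Quot Rel → AssocType2 := Quot.lift nf fun _ _ r => nf_respects r

/-- enumeration of all trees of arity ≤ n -/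
def allT : ℕ → List AssocType2
  | 0 => []
  | n + 1 => .leaf :: ((allT n).flatMap fun a => (allT n).flatMap fun b => [.h a b, .v a b])

lemma one_le_arity : ∀ t : AssocType2, 1 ≤ t.arity
  | .leaf => le_refl _
  | .h a b => le_trans (one_le_arity a) (Nat.le_add_right _ _)
  | .v a b => le_trans (one_le_arity a) (Nat.le_add_right _ _)

lemma mem_allT : ∀ (t : AssocType2) (n : ℕ), t.arity ≤ n → t ∈ allT n := by
  intro t
  induction t with
  | leaf =>
      intro n hn
      obtain ⟨m, rfl⟩ := Nat.exists_eq_add_of_le' hn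
      simp [allT, arity]
  | h a b iha ihb =>
      intro n hn
      have h1 := one_le_arity a
      have h2 := one_le_arity b
      have hn' : 1 ≤ n := le_trans (one_le_arity _) hn
      obtain ⟨m, rfl⟩ := Nat.exists_eq_add_of_le' hn'
      have ha : a ∈ allT m := iha m (by simp [arity] at hn; omega)
      have hb : b ∈ allT m := ihb m (by simp [arity] at hn; omega)
      simp only [allT, List.mem_cons, List.mem_flatMap]
      exact Or.inr ⟨a, ha, b, hb, by simp⟩
  | v a b iha ihb =>
      intro n hn
      have h1 := one_le_arity a
      have h2 := one_le_arity b
      have hn' : 1 ≤ n := le_trans (one_le_arity _) hn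
      obtain ⟨m, rfl⟩ := Nat.exists_eq_add_of_le' hn'
      have ha : a ∈ allT m := iha m (by simp [arity] at hn; omega)
      have hb : b ∈ allT m := ihb m (by simp [arity] at hn; omega)
      simp only [allT, List.mem_cons, List.mem_flatMap]
      exact Or.inr ⟨a, ha, b, hb, by simp⟩

def F (n : ℕ) : Finset AssocType2 :=
  (((allT n).filter fun t => t.arity = n).map nf).toFinset

def phi (n : ℕ) : S n → {t // t ∈ F n} := fun s => ⟨nfQ s.1, by
    obtain ⟨t, ht, hq⟩ := s.2
    have : nfQ s.1 = nf t := by rw [← hq]; rfl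
    rw [this]
    simp only [F, List.mem_toFinset, List.mem_map]
    exact ⟨t, List.mem_filter.2 ⟨mem_allT t n ht.le, by simp [ht]⟩, rfl⟩⟩

lemma card_S (n : ℕ) : Nat.card (S n) = (F n).card := by
  have hbij : Function.Bijective (phi n) := by
    constructor
    · rintro ⟨q, t, ht, rfl⟩ ⟨q', t', ht', rfl⟩ hφ
      have h1 : nf t = nf t' := congrArg Subtype.val hφ
      have h2 : Quot.mk Rel t = Quot.mk Rel t' := by
        rw [← mk_nf t, ← mk_nf t', h1]
      exact Subtype.ext h2
    · rintro ⟨t, ht⟩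
      simp only [F, List.mem_toFinset, List.mem_map] at ht
      obtain ⟨u, hu, rfl⟩ := ht
      have hu' := List.mem_filter.1 hu
      have harr : u.arity = n := by simpa using hu'.2
      exact ⟨⟨Quot.mk Rel u, u, harr, rfl⟩, rfl⟩
  rw [Nat.card_eq_of_bijective (phi n) hbij]
  simp [Nat.card_eq_fintype_card]

end AssocType2

/-- `|S 1| = 1`, `|S 2| = 2`, `|S 3| = 8`, `|S 4| = 39`. -/
theorem stmt9 :
    Nat.card (S 1) = 1 ∧ Nat.card (S 2) = 2 ∧ Nat.card (S 3) = 8 ∧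
      Nat.card (S 4) = 39 := by
  refine ⟨?_, ?_, ?_, ?_⟩ <;> rw [AssocType2.card_S] <;> decide
end

section
/- Let f(t) be the formal power series over ℚ with f(0) = 0 satisfying f − 2f² + f⁴ = t. Then the coefficients of f are: [t¹]f = 1, [t²]f = 2, [t³]f = 8, [t⁴]f = 39, [t⁵]f = 212, [t⁶]f = 1232. -/
/-- the unique power series `f` over `ℚ` with `f(0) = 0` and
`f - 2f² + f⁴ = t` has coefficients `1, 2, 8, 39, 212, 1232` in degrees
`1,...,6`. -/
theorem stmt13 (f : PowerSeries ℚ)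
    (hf0 : PowerSeries.constantCoeff f = 0)
    (hf : f - 2 * f ^ 2 + f ^ 4 = PowerSeries.X) :
    PowerSeries.coeff 1 f = 1 ∧ PowerSeries.coeff 2 f = 2 ∧
    PowerSeries.coeff 3 f = 8 ∧ PowerSeries.coeff 4 f = 39 ∧
    PowerSeries.coeff 5 f = 212 ∧ PowerSeries.coeff 6 f = 1232 := by
  have h0 : PowerSeries.coeff 0 f = 0 := by
    rwa [PowerSeries.coeff_zero_eq_constantCoeff]
  have key : ∀ n : ℕ, PowerSeries.coeff n f - 2 * PowerSeries.coeff n (f ^ 2)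
      + PowerSeries.coeff n (f ^ 4) = PowerSeries.coeff n PowerSeries.X := by
    intro n; rw [← hf, two_mul, two_mul]; simp
  have e1 := key 1
  have e2 := key 2
  have e3 := key 3
  have e4 := key 4
  have e5 := key 5
  have e6 := key 6
  simp only [pow_succ, pow_zero, one_mul, PowerSeries.coeff_mul,
    Finset.Nat.sum_antidiagonal_eq_sum_range_succ_mk, Finset.sum_range_succ,
    Finset.sum_range_zero, PowerSeries.coeff_X, h0, zero_mul, mul_zero, zero_add,
    add_zero, if_true, if_false] at e1 e2 e3 e4 e5 e6
  norm_num at e1 e2 e3 e4 e5 e6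
  have h1 : PowerSeries.coeff 1 f = 1 := by linarith
  rw [h1] at e2 e3 e4 e5 e6
  have h2 : PowerSeries.coeff 2 f = 2 := by linarith
  rw [h2] at e3 e4 e5 e6
  have h3 : PowerSeries.coeff 3 f = 8 := by linarith
  rw [h3] at e4 e5 e6
  have h4 : PowerSeries.coeff 4 f = 39 := by linarith
  rw [h4] at e5 e6
  have h5 : PowerSeries.coeff 5 f = 212 := by linarith
  rw [h5] at e6
  have h6 : PowerSeries.coeff 6 f = 1232 := by linarith
  exact ⟨h1, h2, h3, h4, h5, h6⟩
end
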